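/- Every tree-based unrooted phylogenetic network N has a path partition whose paths all end in L(N): if N contains a spanning tree with leaf set L(N), then the vertex set of N can be partitioned into vertex-disjoint paths of N such that each path has at least one endpoint in L(N) and distinct paths end at distinct leaves. -/

import Mathlib

/-!
Unrooted phylogenetic networks: simple, connected, undirected graphs with
nonempty leaf set and no degree-2 vertices, formalized via `SimpleGraph`.
-/

namespace Paper

variable {V : Type*}

/-- The leaf set of an undirected graph: its vertices of degree 1. -/
def leafSet (G : SimpleGraph V) : Set V := {v : V | (G.neighborSet v).ncard = 1}

/-- `G` is an unrooted phylogenetic network: a simple, connected, undirected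
graph with nonempty leaf set and no vertex of degree 2. -/
def IsUPN (G : SimpleGraph V) : Prop :=
  G.Connected ∧ (leafSet G).Nonempty ∧ ∀ v : V, (G.neighborSet v).ncard ≠ 2

/-- `G` is forest-based: it contains a spanning forest `F` (an acyclic spanning
subgraph) whose set of vertices of degree at most 1 is exactly `leafSet G`, and
such that every edge of `G` has its two ends in different connected components
of `F` (i.e. each tree of `F` is an induced subgraph of `G`). -/
def ForestBasedU (G : SimpleGraph V) : Prop :=
  ∃ F : SimpleGraph V, F ≤ G ∧ F.IsAcyclic ∧
    {v : V | (F.neighborSet v).ncard ≤ 1} = leafSet G ∧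
    ∀ u v : V, G.Adj u v → ¬ F.Adj u v → ¬ F.Reachable u v

/-- `G` is tree-based: it contains a spanning tree (a connected acyclic
spanning subgraph) whose set of degree-1 vertices is exactly `leafSet G`. -/
def TreeBasedU (G : SimpleGraph V) : Prop :=
  ∃ T : SimpleGraph V, T ≤ G ∧ T.Connected ∧ T.IsAcyclic ∧
    {v : V | (T.neighborSet v).ncard = 1} = leafSet G

/-- An (undirected) path in `G`: a nonempty list of pairwise distinct vertices,
consecutive ones joined by edges. -/
def UPath (G : SimpleGraph V) (p : List V) : Prop :=
  p ≠ [] ∧ p.Nodup ∧ p.Chain' G.Adj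

/-- An induced path in `G`: a path whose vertex set induces no edges other than
the consecutive edges of the path. -/
def UInducedPath (G : SimpleGraph V) (p : List V) : Prop :=
  UPath G p ∧ ∀ i j : Fin p.length, G.Adj (p.get i) (p.get j) →
    (j : ℕ) = (i : ℕ) + 1 ∨ (i : ℕ) = (j : ℕ) + 1

/-- The path `p` intersects the leaf set of `G` precisely in its two (distinct)
end vertices. -/
def MeetsLeavesExactlyAtEnds (G : SimpleGraph V) (p : List V) : Prop :=
  ∃ a b : V, p.head? = some a ∧ p.getLast? = some b ∧ a ≠ b ∧
    a ∈ leafSet G ∧ b ∈ leafSet G ∧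
    ∀ v ∈ p, v ∈ leafSet G → v = a ∨ v = b


namespace Aux

open List

variable {V : Type*}

/-- Fuel-based chain following `succ`. -/
def chainAux (succ : V → Option V) : ℕ → V → List V
  | 0, v => [v]
  | n+1, v => v :: (match succ v with | none => [] | some w => chainAux succ n w)

open Classical in
noncomputable def predFn (succ : V → Option V) (v : V) : Option V :=
  if h : ∃ a, succ a = some v then some h.choose else none

noncomputable def rootAux (succ : V → Option V) : ℕ → V → V
  | 0, v => v
  | n+1, v => match predFn succ v with | none => v | some a => rootAux succ n a

noncomputable def chainL (succ : V → Option V) (m : V → ℕ) (B : ℕ) (v : V) : List V :=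
  chainAux succ (B - m v) v

noncomputable def rootV (succ : V → Option V) (m : V → ℕ) (v : V) : V :=
  rootAux succ (m v) v

section Lemmas

variable {succ : V → Option V} {m : V → ℕ} {B : ℕ}

lemma predFn_some {v a : V} (h : predFn succ v = some a) : succ a = some v := by
  by_cases hh : ∃ a, succ a = some v
  · simp only [predFn, dif_pos hh] at h
    injection h with h'
    exact h' ▸ hh.choose_spec
  · rw [predFn, dif_neg hh] at h
    cases h

lemma predFn_none {v : V} (h : predFn succ v = none) : ∀ a, succ a ≠ some v := by
  intro a ha
  by_cases hh : ∃ a, succ a = some v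
  · rw [predFn, dif_pos hh] at h
    cases h
  · exact hh ⟨a, ha⟩

variable (h1 : ∀ v w, succ v = some w → m w = m v + 1)
variable (h2 : ∀ v, m v < B)

include h1 h2 in
lemma chainAux_congr : ∀ (n : ℕ), ∀ (n' : ℕ) (v : V), B - m v ≤ n → B - m v ≤ n' →
    chainAux succ n v = chainAux succ n' v := by
  intro n
  induction n with
  | zero => intro n' v hn hn'; have := h2 v; omega
  | succ k ih =>
    intro n' v hn hn'
    cases n' with
    | zero => have := h2 v; omega
    | succ k' =>
      simp only [chainAux]
      cases h : succ v with
      | none => rfl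
      | some w =>
        have hw := h1 v w h
        have hv := h2 v
        simp only []
        congr 1
        exact ih k' w (by omega) (by omega)

include h2 in
lemma chainL_none {v : V} (hv : succ v = none) : chainL succ m B v = [v] := by
  unfold chainL
  obtain ⟨k, hk⟩ : ∃ k, B - m v = k + 1 := ⟨B - m v - 1, by have := h2 v; omega⟩
  rw [hk]
  simp [chainAux, hv]

include h1 h2 in
lemma chainL_some {v w : V} (hv : succ v = some w) :
    chainL succ m B v = v :: chainL succ m B w := by
  unfold chainL
  obtain ⟨k, hk⟩ : ∃ k, B - m v = k + 1 := ⟨B - m v - 1, by have := h2 v; omega⟩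
  rw [hk]
  simp only [chainAux, hv]
  congr 1
  exact chainAux_congr h1 h2 k (B - m w) w
    (by have := h2 v; have := h1 v w hv; omega) le_rfl

include h1 h2 in
lemma chainL_shape (v : V) : ∃ t, chainL succ m B v = v :: t := by
  cases h : succ v with
  | none => exact ⟨[], chainL_none h2 h⟩
  | some w => exact ⟨_, chainL_some h1 h2 h⟩

include h1 h2 in
lemma mem_chainL_self (v : V) : v ∈ chainL succ m B v := by
  obtain ⟨t, ht⟩ := chainL_shape h1 h2 v
  rw [ht]; exact List.mem_cons_self

include h1 h2 in
lemma chainL_ne_nil (v : V) : chainL succ m B v ≠ [] := by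
  obtain ⟨t, ht⟩ := chainL_shape h1 h2 v
  simp [ht]

include h1 h2 in
lemma mem_chainL_le : ∀ n : ℕ, ∀ v : V, B - m v ≤ n → ∀ x ∈ chainL succ m B v, m v ≤ m x := by
  intro n
  induction n with
  | zero => intro v hn; have := h2 v; omega
  | succ k ih =>
    intro v hn x hx
    cases h : succ v with
    | none =>
      rw [chainL_none h2 h] at hx
      simp at hx; subst hx; exact le_rfl
    | some w =>
      rw [chainL_some h1 h2 h] at hx
      rcases List.mem_cons.1 hx with rfl | hx
      · exact le_rfl
      · have hwx := ih w (by have := h2 v; have := h1 v w h; omega) x hx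
        have := h1 v w h
        omega

include h1 h2 in
lemma chainL_nodup : ∀ n : ℕ, ∀ v : V, B - m v ≤ n → (chainL succ m B v).Nodup := by
  intro n
  induction n with
  | zero => intro v hn; have := h2 v; omega
  | succ k ih =>
    intro v hn
    cases h : succ v with
    | none => rw [chainL_none h2 h]; simp
    | some w =>
      rw [chainL_some h1 h2 h]
      have hw := h1 v w h
      refine List.nodup_cons.2 ⟨fun hv => ?_, ih w (by have := h2 v; omega)⟩
      have := mem_chainL_le h1 h2 B w (by have := h2 w; omega) v hv
      omega

include h1 h2 in
lemma chainL_chain' {A : V → V → Prop} (hA : ∀ v w, succ v = some w → A v w) :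
    ∀ n : ℕ, ∀ v : V, B - m v ≤ n → (chainL succ m B v).Chain' A := by
  intro n
  induction n with
  | zero => intro v hn; have := h2 v; omega
  | succ k ih =>
    intro v hn
    cases h : succ v with
    | none => rw [chainL_none h2 h]; exact List.isChain_singleton v
    | some w =>
      rw [chainL_some h1 h2 h]
      obtain ⟨t, ht⟩ := chainL_shape h1 h2 w
      rw [ht]; apply List.isChain_cons_cons.2
      have hw := h1 v w h
      exact ⟨hA v w h, ht ▸ ih w (by have := h2 v; omega)⟩

include h1 h2 in
lemma chainL_getLast : ∀ n : ℕ, ∀ v : V, B - m v ≤ n →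
    ∃ ℓ, (chainL succ m B v).getLast? = some ℓ ∧ succ ℓ = none := by
  intro n
  induction n with
  | zero => intro v hn; have := h2 v; omega
  | succ k ih =>
    intro v hn
    cases h : succ v with
    | none => exact ⟨v, by rw [chainL_none h2 h]; rfl, h⟩
    | some w =>
      have hw := h1 v w h
      obtain ⟨ℓ, hℓ, hℓ'⟩ := ih w (by have := h2 v; omega)
      refine ⟨ℓ, ?_, hℓ'⟩
      rw [chainL_some h1 h2 h]
      obtain ⟨t, ht⟩ := chainL_shape h1 h2 w
      rw [ht] at hℓ ⊢
      rw [List.getLast?_cons_cons]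
      exact hℓ

include h1 h2 in
lemma chainL_closed : ∀ n : ℕ, ∀ s : V, B - m s ≤ n → ∀ a x, a ∈ chainL succ m B s →
    succ a = some x → x ∈ chainL succ m B s := by
  intro n
  induction n with
  | zero => intro s hn; have := h2 s; omega
  | succ k ih =>
    intro s hn a x ha hax
    cases h : succ s with
    | none =>
      rw [chainL_none h2 h] at ha ⊢
      simp at ha; subst ha
      rw [h] at hax; cases hax
    | some w =>
      have hw := h1 s w h
      rw [chainL_some h1 h2 h] at ha ⊢
      rcases List.mem_cons.1 ha with rfl | ha
      · rw [h] at hax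
        injection hax with hax; subst hax
        exact List.mem_cons_of_mem _ (mem_chainL_self h1 h2 w)
      · exact List.mem_cons_of_mem _
          (ih w (by have := h2 s; omega) a x ha hax)

include h1 in
lemma rootAux_congr : ∀ n : ℕ, ∀ (n' : ℕ) (v : V), m v ≤ n → m v ≤ n' →
    rootAux succ n v = rootAux succ n' v := by
  intro n
  induction n with
  | zero =>
    intro n' v hn hn'
    cases n' with
    | zero => rfl
    | succ k =>
      simp only [rootAux]
      cases hp : predFn succ v with
      | none => rfl
      | some a =>
        have := h1 a v (predFn_some hp)
        omega
  | succ k ih =>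
    intro n' v hn hn'
    cases n' with
    | zero =>
      simp only [rootAux]
      cases hp : predFn succ v with
      | none => rfl
      | some a =>
        have := h1 a v (predFn_some hp)
        omega
    | succ k' =>
      simp only [rootAux]
      cases hp : predFn succ v with
      | none => rfl
      | some a =>
        have := h1 a v (predFn_some hp)
        exact ih k' a (by omega) (by omega)

lemma rootV_none {v : V} (hp : predFn succ v = none) : rootV succ m v = v := by
  unfold rootV
  cases hm : m v with
  | zero => rfl
  | succ k => simp [rootAux, hp]

include h1 in
lemma rootV_some {v a : V} (hp : predFn succ v = some a) :
    rootV succ m v = rootV succ m a := by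
  have hma := h1 a v (predFn_some hp)
  unfold rootV
  have h' : rootAux succ (m v) v = rootAux succ (m a + 1) v := by rw [hma]
  rw [h']
  simp only [rootAux, hp]

include h1 in
lemma rootV_start : ∀ n : ℕ, ∀ v : V, m v ≤ n → predFn succ (rootV succ m v) = none := by
  intro n
  induction n with
  | zero =>
    intro v hn
    cases hp : predFn succ v with
    | none => rw [rootV_none hp]; exact hp
    | some a => have := h1 a v (predFn_some hp); omega
  | succ k ih =>
    intro v hn
    cases hp : predFn succ v with
    | none => rw [rootV_none hp]; exact hp
    | some a =>
      have := h1 a v (predFn_some hp)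
      rw [rootV_some h1 hp]
      exact ih a (by omega)

include h1 h2 in
lemma mem_chainL_rootV : ∀ n : ℕ, ∀ v : V, m v ≤ n → v ∈ chainL succ m B (rootV succ m v) := by
  intro n
  induction n with
  | zero =>
    intro v hn
    cases hp : predFn succ v with
    | none => rw [rootV_none hp]; exact mem_chainL_self h1 h2 v
    | some a => have := h1 a v (predFn_some hp); omega
  | succ k ih =>
    intro v hn
    cases hp : predFn succ v with
    | none => rw [rootV_none hp]; exact mem_chainL_self h1 h2 v
    | some a =>
      have hma := h1 a v (predFn_some hp)
      rw [rootV_some h1 hp]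
      exact chainL_closed h1 h2 B (rootV succ m a)
        (by have := h2 (rootV succ m a); omega) a v
        (ih a (by omega)) (predFn_some hp)

variable (h3 : ∀ a b x, succ a = some x → succ b = some x → a = b)

include h1 h2 h3 in
lemma rootV_of_mem_chainL : ∀ n : ℕ, ∀ s : V, B - m s ≤ n → ∀ v ∈ chainL succ m B s,
    rootV succ m v = rootV succ m s := by
  intro n
  induction n with
  | zero => intro s hn; have := h2 s; omega
  | succ k ih =>
    intro s hn v hv
    cases h : succ s with
    | none =>
      rw [chainL_none h2 h] at hv
      simp at hv; subst hv; rfl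
    | some w =>
      have hw := h1 s w h
      rw [chainL_some h1 h2 h] at hv
      rcases List.mem_cons.1 hv with rfl | hv
      · rfl
      · have hvw := ih w (by have := h2 s; omega) v hv
        have hpw : predFn succ w = some s := by
          have hh : ∃ a, succ a = some w := ⟨s, h⟩
          simp only [predFn, dif_pos hh]
          exact congrArg some (h3 _ _ _ hh.choose_spec h)
        rw [hvw, rootV_some h1 hpw]

include h1 h2 h3 in
lemma abstract_main (v0 : V) (A : V → V → Prop) (Lf : Set V)
    (hA : ∀ v w, succ v = some w → A v w)
    (hL : ∀ v, succ v = none → v ∈ Lf) :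
    ∃ (P : Set (List V)) (f : List V → V),
      (∀ p ∈ P, p ≠ [] ∧ p.Nodup ∧ p.Chain' A) ∧
      (∀ v : V, ∃! p, p ∈ P ∧ v ∈ p) ∧
      (∀ p ∈ P, f p ∈ Lf ∧ p.getLast? = some (f p)) ∧
      (∀ p ∈ P, ∀ q ∈ P, f p = f q → p = q) := by
  classical
  refine ⟨{p | ∃ s, predFn succ s = none ∧ p = chainL succ m B s},
    fun p => p.getLastD v0, ?_, ?_, ?_, ?_⟩
  · rintro p ⟨s, hs, rfl⟩
    exact ⟨chainL_ne_nil h1 h2 s, chainL_nodup h1 h2 B s (Nat.sub_le _ _),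
      chainL_chain' h1 h2 hA B s (Nat.sub_le _ _)⟩
  · intro v
    refine ⟨chainL succ m B (rootV succ m v),
      ⟨⟨rootV succ m v, rootV_start h1 (m v) v le_rfl, rfl⟩,
        mem_chainL_rootV h1 h2 (m v) v le_rfl⟩, ?_⟩
    rintro q ⟨⟨s, hs, rfl⟩, hvq⟩
    have := rootV_of_mem_chainL h1 h2 h3 B s (Nat.sub_le _ _) v hvq
    rw [this, rootV_none hs]
  · rintro p ⟨s, hs, rfl⟩
    obtain ⟨ℓ, hℓ, hℓ'⟩ := chainL_getLast h1 h2 B s (Nat.sub_le _ _)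
    have : (chainL succ m B s).getLastD v0 = ℓ := by
      rw [List.getLastD_eq_getLast?, hℓ]; rfl
    dsimp only
    rw [this]
    exact ⟨hL ℓ hℓ', hℓ⟩
  · rintro p ⟨s, hs, rfl⟩ q ⟨s', hs', rfl⟩ hfg
    obtain ⟨ℓ, hℓ, hℓ'⟩ := chainL_getLast h1 h2 B s (Nat.sub_le _ _)
    obtain ⟨ℓ2, hℓ2, hℓ2'⟩ := chainL_getLast h1 h2 B s' (Nat.sub_le _ _)
    have e1 : (chainL succ m B s).getLastD v0 = ℓ := by
      rw [List.getLastD_eq_getLast?, hℓ]; rfl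
    have e2 : (chainL succ m B s').getLastD v0 = ℓ2 := by
      rw [List.getLastD_eq_getLast?, hℓ2]; rfl
    dsimp only at hfg
    rw [e1, e2] at hfg; subst hfg
    have hm1 : ℓ ∈ chainL succ m B s := List.mem_of_getLast? hℓ
    have hm2 : ℓ ∈ chainL succ m B s' := List.mem_of_getLast? hℓ2
    have r1 := rootV_of_mem_chainL h1 h2 h3 B s (Nat.sub_le _ _) ℓ hm1
    have r2 := rootV_of_mem_chainL h1 h2 h3 B s' (Nat.sub_le _ _) ℓ hm2
    rw [rootV_none hs] at r1
    rw [rootV_none hs'] at r2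
    rw [← r1, r2]

end Lemmas

end Aux

set_option linter.unusedSectionVars false
namespace Aux2

open SimpleGraph Walk

variable {V : Type*} [DecidableEq V] {T : SimpleGraph V} {r : V}

variable (hc : T.Connected) (ha : T.IsAcyclic)

include hc ha in
lemma tree_path_length {v : V} (p : T.Walk r v) (hp : p.IsPath) :
    p.length = T.dist r v := by
  obtain ⟨q, hq, hql⟩ := hc.exists_path_of_dist r v
  have h : (⟨p, hp⟩ : T.Path r v) = ⟨q, hq⟩ := ha.path_unique _ _
  rw [show p = q from congrArg Subtype.val h, hql]

include hc ha in
lemma support_dist_le {v : V} (p : T.Walk r v) (hp : p.IsPath) {x : V}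
    (hx : x ∈ p.support) : T.dist r x ≤ p.length := by
  have h1 := tree_path_length hc ha (p.takeUntil x hx) (hp.takeUntil hx)
  have h2 := p.length_takeUntil_le hx
  omega

omit hc ha in
lemma concat_isPath {u v : V} (p : T.Walk r u) (hp : p.IsPath) (huv : T.Adj u v)
    (hv : v ∉ p.support) : (p.concat huv).IsPath := by
  rw [← isPath_reverse_iff, reverse_concat]
  exact (hp.reverse).cons (by rw [support_reverse, List.mem_reverse]; exact hv)

include hc ha in
lemma adj_dist {u v : V} (huv : T.Adj u v) :
    T.dist r v = T.dist r u + 1 ∨ T.dist r u = T.dist r v + 1 := by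
  obtain ⟨p, hp, hl⟩ := hc.exists_path_of_dist r u
  by_cases hv : v ∈ p.support
  · right
    have hq : (p.dropUntil v hv).IsPath := hp.dropUntil hv
    have hq1 : (p.dropUntil v hv).length = 1 := by
      have hedge : (Walk.cons huv.symm Walk.nil : T.Walk v u).IsPath := by
        simp [huv.ne']
      have h := ha.path_unique (⟨p.dropUntil v hv, hq⟩ : T.Path v u) ⟨_, hedge⟩
      rw [show p.dropUntil v hv = Walk.cons huv.symm Walk.nil from congrArg Subtype.val h]
      rfl
    have htake := tree_path_length hc ha (p.takeUntil v hv) (hp.takeUntil hv)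
    have hspec := congrArg Walk.length (p.take_spec hv)
    rw [length_append] at hspec
    omega
  · left
    have hcp : (p.concat huv).IsPath := concat_isPath p hp huv hv
    have h := tree_path_length hc ha (p.concat huv) hcp
    rw [length_concat] at h
    omega

include hc ha in
lemma parent_unique {a b v : V} (hav : T.Adj a v) (hbv : T.Adj b v)
    (hda : T.dist r a + 1 = T.dist r v) (hdb : T.dist r b + 1 = T.dist r v) :
    a = b := by
  obtain ⟨p, hp, hl⟩ := hc.exists_path_of_dist r a
  obtain ⟨q, hq, hql⟩ := hc.exists_path_of_dist r b
  have hvp : v ∉ p.support := fun hv => by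
    have := support_dist_le hc ha p hp hv; omega
  have hvq : v ∉ q.support := fun hv => by
    have := support_dist_le hc ha q hq hv; omega
  have hpa : (p.concat hav).IsPath := concat_isPath p hp hav hvp
  have hqb : (q.concat hbv).IsPath := concat_isPath q hq hbv hvq
  have h : (⟨p.concat hav, hpa⟩ : T.Path r v) = ⟨q.concat hbv, hqb⟩ := ha.path_unique _ _
  have heq : p.concat hav = q.concat hbv := congrArg Subtype.val h
  have hsup := congrArg Walk.support heq
  rw [support_concat, support_concat] at hsup
  have hpq : p.support = q.support := by
    have h1 : p.support ++ [v] = q.support ++ [v] := by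
      simpa [List.concat_eq_append] using hsup
    exact List.append_cancel_right h1
  have ha' : p.support.reverse.head? = some a := by
    rw [← support_reverse, support_eq_cons]; rfl
  have hb' : q.support.reverse.head? = some b := by
    rw [← support_reverse, support_eq_cons]; rfl
  rw [hpq, hb'] at ha'
  injection ha' with ha''
  exact ha''.symm

include hc ha in
lemma parent_exists {v : V} (hvr : v ≠ r) :
    ∃ a, T.Adj a v ∧ T.dist r a + 1 = T.dist r v := by
  obtain ⟨p, hp, hl⟩ := hc.exists_path_of_dist r v
  cases hrev : p.reverse with
  | nil => exact absurd rfl hvr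
  | cons h q =>
    rename_i x
    refine ⟨x, h.symm, ?_⟩
    have hqp : q.IsPath := by
      have := hp.reverse
      rw [hrev] at this
      exact this.of_cons
    have hpl : p.length = q.length + 1 := by
      have := congrArg Walk.length hrev
      rw [length_reverse] at this
      simp [this]
    have hqr := tree_path_length hc ha q.reverse hqp.reverse
    rw [length_reverse] at hqr
    omega

end Aux2

open SimpleGraph in
/-- Every tree-based unrooted phylogenetic network `N` has a
path partition whose paths all end in `L(N)`: if `N` contains a spanning tree
with leaf set `L(N)`, then the vertex set of `N` can be partitioned into
vertex-disjoint paths of `N` such that each path has at least one endpoint in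
`L(N)` and distinct paths end at distinct leaves. -/
theorem treeBased_pathPartition_ending_in_leaves
    {V : Type*} [Fintype V] (G : SimpleGraph V)
    (hUPN : IsUPN G) (hTB : TreeBasedU G) :
    ∃ (P : Set (List V)) (f : List V → V),
      (∀ p ∈ P, UPath G p) ∧
      (∀ v : V, ∃! p, p ∈ P ∧ v ∈ p) ∧
      (∀ p ∈ P, f p ∈ leafSet G ∧
        (p.head? = some (f p) ∨ p.getLast? = some (f p))) ∧
      ∀ p ∈ P, ∀ q ∈ P, f p = f q → p = q := by
  classical
  obtain ⟨T, hTG, hTc, hTa, hLeaf⟩ := hTB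
  obtain ⟨r, hr⟩ := hUPN.2.1
  obtain ⟨succ, hsucc_some, hsucc_none⟩ :
      ∃ succ : V → Option V,
        (∀ v w, succ v = some w → T.Adj v w ∧ T.dist r w = T.dist r v + 1) ∧
        (∀ v, succ v = none → ¬ ∃ x, T.Adj v x ∧ T.dist r x = T.dist r v + 1) := by
    refine ⟨fun v => if h : ∃ x, T.Adj v x ∧ T.dist r x = T.dist r v + 1
      then some h.choose else none, ?_, ?_⟩
    · intro v w h
      dsimp only at h
      by_cases hh : ∃ x, T.Adj v x ∧ T.dist r x = T.dist r v + 1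
      · rw [dif_pos hh] at h
        injection h with h'
        exact h' ▸ hh.choose_spec
      · rw [dif_neg hh] at h
        cases h
    · intro v h hh
      dsimp only at h
      rw [dif_pos hh] at h
      cases h
  have h1 : ∀ v w, succ v = some w → T.dist r w = T.dist r v + 1 :=
    fun v w h => (hsucc_some v w h).2
  have h2 : ∀ v, T.dist r v < Fintype.card V := by
    intro v
    obtain ⟨p, hp, hl⟩ := hTc.exists_path_of_dist r v
    rw [← hl]; exact hp.length_lt
  have h3 : ∀ a b x, succ a = some x → succ b = some x → a = b := by
    intro a b x hax hbx
    obtain ⟨haa, hda⟩ := hsucc_some a x hax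
    obtain ⟨hbb, hdb⟩ := hsucc_some b x hbx
    exact Aux2.parent_unique (r := r) hTc hTa haa hbb (by omega) (by omega)
  have hA : ∀ v w, succ v = some w → G.Adj v w := fun v w h => hTG (hsucc_some v w h).1
  have hL : ∀ v, succ v = none → v ∈ leafSet G := by
    intro v hv
    by_cases hvr : v = r
    · subst hvr; exact hr
    · by_contra hnl
      have hcard1 : (T.neighborSet v).ncard ≠ 1 := by
        intro h
        exact hnl (by rw [← hLeaf]; exact h)
      obtain ⟨a, hav, hda⟩ := Aux2.parent_exists hTc hTa hvr
      have hfin : (T.neighborSet v).Finite := Set.toFinite _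
      have hpos : 0 < (T.neighborSet v).ncard := (Set.ncard_pos hfin).2 ⟨a, hav.symm⟩
      have hlt : 1 < (T.neighborSet v).ncard := by omega
      obtain ⟨x, hx, y, hy, hxy⟩ := (Set.one_lt_ncard hfin).1 hlt
      have hz : ∃ z, T.Adj v z ∧ z ≠ a := by
        by_cases hxa : x = a
        · exact ⟨y, hy, fun hh => hxy (hxa.trans hh.symm)⟩
        · exact ⟨x, hx, hxa⟩
      obtain ⟨z, hvz, hza⟩ := hz
      rcases Aux2.adj_dist hTc hTa hvz with hcase | hcase
      · exact hsucc_none v hv ⟨z, hvz, hcase⟩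
      · exact hza (Aux2.parent_unique (r := r) hTc hTa hvz.symm hav (by omega) (by omega))
  obtain ⟨P, f, hP1, hP2, hP3, hP4⟩ :=
    Aux.abstract_main (B := Fintype.card V) h1 h2 h3 r G.Adj (leafSet G) hA hL
  exact ⟨P, f, fun p hp => hP1 p hp, hP2,
    fun p hp => ⟨(hP3 p hp).1, Or.inr (hP3 p hp).2⟩, hP4⟩

end Paper
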